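/- (Theorem 5, limiting expected number of non-empty columns) Fix an integer n ≥ 1. Suppose that for each k ∈ {1,…,n} a constant C_k (not depending on α) satisfies lim_{p→∞} ((α+p)/α) · ∫_ℝ Φ(x)^k · τ_p⁻¹ φ((x − μ_p)/τ_p) dx = C_k for all α > 0. Then the expected number of non-empty columns E(p*) = p · (1 − ∫_ℝ (1 − Φ(x))^n · τ_p⁻¹ φ((x − μ_p)/τ_p) dx) satisfies lim_{p→∞} E(p*) = α · Σ_{k=1}^n (−1)^{k+1} C(n,k) C_k; in particular the limit is finite and proportional to α. -/

import Mathlib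

open MeasureTheory Real Filter

noncomputable def stdNormalPDF (x : ℝ) : ℝ :=
  (Real.sqrt (2 * Real.pi))⁻¹ * Real.exp (-x ^ 2 / 2)

noncomputable def stdNormalCDF (x : ℝ) : ℝ :=
  ∫ t in Set.Iio x, stdNormalPDF t

noncomputable def tauP (p : ℕ) : ℝ := Real.sqrt (2 * Real.log p)

noncomputable def mvpDens (μ : ℕ → ℝ) (p : ℕ) (x : ℝ) : ℝ :=
  (tauP p)⁻¹ * stdNormalPDF ((x - μ p) / tauP p)

lemma pdf_nonneg (x : ℝ) : 0 ≤ stdNormalPDF x := by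
  unfold stdNormalPDF; positivity

lemma pdf_integrable : Integrable stdNormalPDF := by
  have : Integrable (fun x : ℝ => Real.exp (-(1/2 : ℝ) * x ^ 2)) := integrable_exp_neg_mul_sq (by norm_num)
  have h := this.const_mul (Real.sqrt (2 * Real.pi))⁻¹
  refine h.congr (Eventually.of_forall fun x => ?_)
  unfold stdNormalPDF; ring_nf

lemma pdf_integral : ∫ x : ℝ, stdNormalPDF x = 1 := by
  have h : ∫ x : ℝ, Real.exp (-(1/2 : ℝ) * x ^ 2) = Real.sqrt (Real.pi / (1/2)) :=
    integral_gaussian (1/2)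
  have h2 : ∫ x : ℝ, stdNormalPDF x = (Real.sqrt (2 * Real.pi))⁻¹ * ∫ x : ℝ, Real.exp (-(1/2 : ℝ) * x ^ 2) := by
    rw [← integral_const_mul]
    congr 1; ext x; unfold stdNormalPDF; ring_nf
  rw [h2, h]
  have : Real.pi / (1/2) = 2 * Real.pi := by ring
  rw [this, inv_mul_cancel₀]
  positivity

lemma cdf_nonneg (x : ℝ) : 0 ≤ stdNormalCDF x :=
  integral_nonneg fun t => pdf_nonneg t

lemma cdf_le_one (x : ℝ) : stdNormalCDF x ≤ 1 := by
  rw [← pdf_integral]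
  exact setIntegral_le_integral pdf_integrable (Eventually.of_forall pdf_nonneg)

lemma cdf_mono : Monotone stdNormalCDF := fun a b hab =>
  setIntegral_mono_set pdf_integrable.integrableOn
    (Eventually.of_forall pdf_nonneg) (HasSubset.Subset.eventuallyLE (Set.Iio_subset_Iio hab))

lemma cdf_measurable : Measurable stdNormalCDF := cdf_mono.measurable

lemma tauP_pos {p : ℕ} (hp : 2 ≤ p) : 0 < tauP p := by
  have : (1:ℝ) < p := by exact_mod_cast Nat.lt_of_lt_of_le one_lt_two hp
  have hl : 0 < Real.log p := Real.log_pos this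
  unfold tauP; positivity

lemma dens_nonneg (μ : ℕ → ℝ) {p : ℕ} (hp : 2 ≤ p) (x : ℝ) : 0 ≤ mvpDens μ p x := by
  unfold mvpDens
  exact mul_nonneg (inv_nonneg.2 (tauP_pos hp).le) (pdf_nonneg _)

lemma dens_integrable (μ : ℕ → ℝ) {p : ℕ} (hp : 2 ≤ p) : Integrable (mvpDens μ p) := by
  have h1 : Integrable (fun x : ℝ => stdNormalPDF (x / tauP p)) :=
    pdf_integrable.comp_div (tauP_pos hp).ne'
  have h2 : Integrable (fun x : ℝ => stdNormalPDF ((x - μ p) / tauP p)) :=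
    h1.comp_sub_right (μ p)
  exact (h2.const_mul _).congr (Eventually.of_forall fun x => rfl)

lemma dens_integral (μ : ℕ → ℝ) {p : ℕ} (hp : 2 ≤ p) : ∫ x : ℝ, mvpDens μ p x = 1 := by
  unfold mvpDens
  rw [integral_const_mul]
  rw [integral_sub_right_eq_self (fun x => stdNormalPDF (x / tauP p)) (μ p)]
  rw [Measure.integral_comp_div stdNormalPDF (tauP p), pdf_integral,
    abs_of_pos (tauP_pos hp)]
  simp [inv_mul_cancel₀ (tauP_pos hp).ne']

lemma pow_dens_integrable (μ : ℕ → ℝ) {p : ℕ} (hp : 2 ≤ p) (k : ℕ) :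
    Integrable (fun x : ℝ => stdNormalCDF x ^ k * mvpDens μ p x) := by
  refine (dens_integrable μ hp).bdd_mul (c := 1) ?_ (Eventually.of_forall fun x => ?_)
  · exact ((cdf_measurable.pow_const k)).aestronglyMeasurable
  · rw [Real.norm_eq_abs, abs_of_nonneg (pow_nonneg (cdf_nonneg x) k)]
    exact pow_le_one₀ (cdf_nonneg x) (cdf_le_one x)

/-- Theorem 5 (limiting expected number of non-empty columns): fix `n ≥ 1` and suppose
constants `C_k` (not depending on `α`) satisfy, for all `α > 0` and `k ∈ {1,…,n}`,
`lim_{p→∞} ((α+p)/α) ∫ Φ(x)^k τ_p⁻¹φ((x-μ_p)/τ_p) dx = C_k`. Then for every `α > 0`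
the expected number of non-empty columns
`E(p*) = p(1 - ∫ (1-Φ(x))^n τ_p⁻¹φ((x-μ_p)/τ_p) dx)` satisfies
`lim_{p→∞} E(p*) = α Σ_{k=1}^n (-1)^{k+1} C(n,k) C_k`. -/
theorem mvpIBP_nonempty_columns (n : ℕ) (hn : 1 ≤ n) (C : ℕ → ℝ)
    (hC : ∀ α : ℝ, 0 < α → ∀ μ : ℕ → ℝ,
      (∀ p : ℕ, 2 ≤ p →
        stdNormalCDF (μ p / Real.sqrt (1 + tauP p ^ 2)) = α / (α + p)) →
      ∀ k ∈ Finset.Icc 1 n,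
        Filter.Tendsto
          (fun p : ℕ => ((α + p) / α) * ∫ x : ℝ, stdNormalCDF x ^ k * mvpDens μ p x)
          Filter.atTop (nhds (C k))) :
    ∀ α : ℝ, 0 < α → ∀ μ : ℕ → ℝ,
      (∀ p : ℕ, 2 ≤ p →
        stdNormalCDF (μ p / Real.sqrt (1 + tauP p ^ 2)) = α / (α + p)) →
      Filter.Tendsto
        (fun p : ℕ => (p : ℝ) * (1 - ∫ x : ℝ, (1 - stdNormalCDF x) ^ n * mvpDens μ p x))
        Filter.atTop
        (nhds (α * ∑ k ∈ Finset.Icc 1 n, (-1 : ℝ) ^ (k + 1) * (n.choose k : ℝ) * C k)) := by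
  intro α hα μ hμ
  set I : ℕ → ℕ → ℝ := fun p k => ∫ x : ℝ, stdNormalCDF x ^ k * mvpDens μ p x with hI
  have hαp : ∀ p : ℕ, 0 < α + (p:ℝ) := fun p => by positivity
  -- limits of p * I p k
  have key : ∀ k ∈ Finset.Icc 1 n,
      Tendsto (fun p : ℕ => (p:ℝ) * I p k) atTop (nhds (α * C k)) := by
    intro k hk
    have h1 := hC α hα μ hμ k hk
    have hd : Tendsto (fun p : ℕ => α + (p:ℝ)) atTop atTop :=
      tendsto_atTop_add_const_left _ _ tendsto_natCast_atTop_atTop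
    have hinv : Tendsto (fun p : ℕ => (α + (p:ℝ))⁻¹) atTop (nhds 0) :=
      hd.inv_tendsto_atTop
    have h2 : Tendsto (fun p : ℕ => α * (p:ℝ) / (α + p)) atTop (nhds α) := by
      have h3 : Tendsto (fun p : ℕ => α - α ^ 2 * (α + (p:ℝ))⁻¹) atTop (nhds (α - α^2 * 0)) :=
        tendsto_const_nhds.sub (tendsto_const_nhds.mul hinv)
      simp only [mul_zero, sub_zero] at h3
      refine h3.congr fun p => ?_
      field_simp
      ring
    have h4 := h1.mul h2
    have e : ∀ p : ℕ, ((α + p) / α * I p k) * (α * (p:ℝ) / (α + p)) = (p:ℝ) * I p k := by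
      intro p
      field_simp
    have := h4.congr e
    convert this using 2
    ring
  -- eventual equality of the expression with a finite sum
  have hev : ∀ᶠ p : ℕ in atTop,
      (p : ℝ) * (1 - ∫ x : ℝ, (1 - stdNormalCDF x) ^ n * mvpDens μ p x)
        = ∑ k ∈ Finset.Icc 1 n, (-1:ℝ) ^ (k+1) * (n.choose k : ℝ) * ((p:ℝ) * I p k) := by
    filter_upwards [eventually_ge_atTop 2] with p hp
    have hpt : ∀ x : ℝ, (1 - stdNormalCDF x) ^ n * mvpDens μ p x
        = ∑ k ∈ Finset.range (n+1), ((-1:ℝ)^k * (n.choose k : ℝ)) * (stdNormalCDF x ^ k * mvpDens μ p x) := by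
      intro x
      rw [show (1 : ℝ) - stdNormalCDF x = -stdNormalCDF x + 1 by ring, add_pow]
      rw [Finset.sum_mul]
      refine Finset.sum_congr rfl fun k _ => ?_
      rw [neg_pow]
      ring
    have hint : ∫ x : ℝ, (1 - stdNormalCDF x) ^ n * mvpDens μ p x
        = ∑ k ∈ Finset.range (n+1), ((-1:ℝ)^k * (n.choose k : ℝ)) * I p k := by
      simp_rw [hpt]
      rw [integral_finset_sum]
      · exact Finset.sum_congr rfl fun k _ => integral_const_mul _ _
      · exact fun k _ => (pow_dens_integrable μ hp k).const_mul _
    have hI0 : I p 0 = 1 := by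
      simp only [hI, pow_zero, one_mul]
      exact dens_integral μ hp
    have hsplit : ∑ k ∈ Finset.range (n+1), ((-1:ℝ)^k * (n.choose k : ℝ)) * I p k
        = 1 + ∑ k ∈ Finset.Icc 1 n, ((-1:ℝ)^k * (n.choose k : ℝ)) * I p k := by
      rw [Finset.sum_range_succ' (fun k => ((-1:ℝ)^k * (n.choose k : ℝ)) * I p k) n]
      rw [← Finset.Ico_add_one_right_eq_Icc, Finset.sum_Ico_eq_sum_range]
      simp only [pow_zero, Nat.choose_zero_right, Nat.cast_one, one_mul, hI0]
      rw [add_comm]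
      congr 1
      refine Finset.sum_congr (by simp) fun i _ => by rw [add_comm 1 i]
    rw [hint, hsplit, sub_add_eq_sub_sub, sub_self, zero_sub, ← Finset.sum_neg_distrib, Finset.mul_sum]
    exact Finset.sum_congr rfl fun k _ => by rw [pow_succ]; ring
  -- conclude
  have hsum : Tendsto
      (fun p : ℕ => ∑ k ∈ Finset.Icc 1 n, (-1:ℝ) ^ (k+1) * (n.choose k : ℝ) * ((p:ℝ) * I p k))
      atTop (nhds (∑ k ∈ Finset.Icc 1 n, (-1:ℝ) ^ (k+1) * (n.choose k : ℝ) * (α * C k))) := by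
    exact tendsto_finset_sum _ fun k hk => (tendsto_const_nhds.mul (key k hk))
  have hfinal := hsum.congr' (hev.mono fun p h => h.symm)
  convert hfinal using 2
  rw [Finset.mul_sum]
  exact Finset.sum_congr rfl fun k _ => by ring
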